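/- arXiv:hep-th/9710082 — 6 statements merged into one kernel-verified Lean document; each statement's English description precedes it below -/
import Mathlib

section
/- A real 3×3 matrix A satisfies the two conditions (i) ∑_{α,β} A_{αβ}² = 3 and (ii) ∑_{α,γ,β,δ} ε_{αγη} ε_{βδθ} A_{αβ} A_{γδ} = 2 A_{ηθ} for all η, θ (where ε is the Levi-Civita symbol on three indices) if and only if A belongs to SO(3), i.e. AᵀA = 1 and det A = 1. -/
open Matrix

/-- The Levi-Civita symbol on three indices, with `eps3 0 1 2 = 1`
(corresponding to `ε₁₂₃ = 1` in 1-based notation). -/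
noncomputable def eps3 (a b c : Fin 3) : ℝ :=
  ((b.val : ℝ) - (a.val : ℝ)) * ((c.val : ℝ) - (a.val : ℝ)) *
    ((c.val : ℝ) - (b.val : ℝ)) / 2

set_option maxHeartbeats 1000000 in
lemma eps3_sum_eq_adjugate (A : Matrix (Fin 3) (Fin 3) ℝ) (η θ : Fin 3) :
    ∑ α, ∑ γ, ∑ β, ∑ δ, eps3 α γ η * eps3 β δ θ * A α β * A γ δ
      = 2 * A.adjugate θ η := by
  simp only [Fin.sum_univ_three, Matrix.adjugate_fin_three]
  fin_cases η <;> fin_cases θ <;> norm_num [eps3] <;> ring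

lemma sq_sum_eq_trace (A : Matrix (Fin 3) (Fin 3) ℝ) :
    ∑ α, ∑ β, (A α β) ^ 2 = (Aᵀ * A).trace := by
  simp only [Matrix.trace, Matrix.diag, Matrix.mul_apply, Matrix.transpose_apply]
  rw [Finset.sum_comm]
  simp [sq]

/-- A real 3×3 matrix `A` satisfies `∑ A_{αβ}² = 3` and
`∑ ε_{αγη} ε_{βδθ} A_{αβ} A_{γδ} = 2 A_{ηθ}` iff `A ∈ SO(3)`. -/
theorem stmt0 (A : Matrix (Fin 3) (Fin 3) ℝ) :
    ((∑ α, ∑ β, (A α β) ^ 2 = 3) ∧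
      (∀ η θ, ∑ α, ∑ γ, ∑ β, ∑ δ,
        eps3 α γ η * eps3 β δ θ * A α β * A γ δ = 2 * A η θ)) ↔
    (Aᵀ * A = 1 ∧ A.det = 1) := by
  constructor
  · rintro ⟨h1, h2⟩
    have hadj : A.adjugate = Aᵀ := by
      ext θ η
      have := (eps3_sum_eq_adjugate A η θ).symm.trans (h2 η θ)
      simpa [Matrix.transpose_apply] using mul_left_cancel₀ (two_ne_zero) this
    have hAtA : Aᵀ * A = A.det • 1 := by
      rw [← hadj, Matrix.adjugate_mul]
    have htr : (Aᵀ * A).trace = 3 * A.det := by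
      rw [hAtA]
      simp [Matrix.trace_smul, Matrix.trace_one]
      ring
    have hdet : A.det = 1 := by
      have : (3 : ℝ) * A.det = 3 := by rw [← htr, ← sq_sum_eq_trace, h1]
      linarith
    refine ⟨?_, hdet⟩
    rw [hAtA, hdet, one_smul]
  · rintro ⟨hO, hdet⟩
    have hadj : A.adjugate = Aᵀ := by
      have h := Matrix.adjugate_mul A
      rw [hdet, one_smul] at h
      calc A.adjugate = A.adjugate * (A * Aᵀ) := by
            rw [mul_eq_one_comm.mp hO, mul_one]
        _ = (A.adjugate * A) * Aᵀ := by rw [mul_assoc]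
        _ = Aᵀ := by rw [h, one_mul]
    constructor
    · rw [sq_sum_eq_trace, hO, Matrix.trace_one]; norm_num
    · intro η θ
      rw [eps3_sum_eq_adjugate, hadj, Matrix.transpose_apply]
end

section
/- If a real 3×3 matrix A satisfies ∑ ε_{αγη} ε_{βδθ} A_{αβ} A_{γδ} = 2 A_{ηθ} for all η, θ, then AᵀA = AAᵀ = (det A)·1. -/
open Matrix

/-- If `∑ ε_{αγη} ε_{βδθ} A_{αβ} A_{γδ} = 2 A_{ηθ}` then
`AᵀA = AAᵀ = (det A)·1`. -/
theorem stmt1 (A : Matrix (Fin 3) (Fin 3) ℝ)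
    (hA : ∀ η θ, ∑ α, ∑ γ, ∑ β, ∑ δ,
      eps3 α γ η * eps3 β δ θ * A α β * A γ δ = 2 * A η θ) :
    Aᵀ * A = A.det • (1 : Matrix (Fin 3) (Fin 3) ℝ) ∧
      A * Aᵀ = A.det • (1 : Matrix (Fin 3) (Fin 3) ℝ) := by
  have h00 := hA 0 0; have h01 := hA 0 1; have h02 := hA 0 2
  have h10 := hA 1 0; have h11 := hA 1 1; have h12 := hA 1 2
  have h20 := hA 2 0; have h21 := hA 2 1; have h22 := hA 2 2
  simp only [Fin.sum_univ_three, eps3] at h00 h01 h02 h10 h11 h12 h20 h21 h22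
  norm_num at h00 h01 h02 h10 h11 h12 h20 h21 h22
  have h : adjugate A = Aᵀ := by
    ext i j
    fin_cases i <;> fin_cases j <;>
      simp [Matrix.adjugate_fin_three, Matrix.transpose_apply] <;> linarith
  refine ⟨?_, ?_⟩
  · rw [← h, adjugate_mul]
  · rw [← h, mul_adjugate]
end

section
/- If real 3×3 matrices A and B each satisfy the identity ∑ ε_{αγη} ε_{βδθ} M_{αβ} M_{γδ} = 2 M_{ηθ} (with M = A and M = B respectively), then the product AB also satisfies this identity. -/
open Matrix

/-- The Levi-Civita double sum computes twice the transposed adjugate. -/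
theorem eps3_adjugate (M : Matrix (Fin 3) (Fin 3) ℝ) (η θ : Fin 3) :
    ∑ α, ∑ γ, ∑ β, ∑ δ, eps3 α γ η * eps3 β δ θ * M α β * M γ δ
      = 2 * M.adjugate θ η := by
  fin_cases η <;> fin_cases θ <;>
    simp [Matrix.adjugate_fin_three, Fin.sum_univ_three, eps3] <;> ring

/-- If `A` and `B` each satisfy `∑ ε_{αγη} ε_{βδθ} M_{αβ} M_{γδ} = 2 M_{ηθ}`,
then so does the product `A * B`. -/
theorem stmt2 (A B : Matrix (Fin 3) (Fin 3) ℝ)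
    (hA : ∀ η θ, ∑ α, ∑ γ, ∑ β, ∑ δ,
      eps3 α γ η * eps3 β δ θ * A α β * A γ δ = 2 * A η θ)
    (hB : ∀ η θ, ∑ α, ∑ γ, ∑ β, ∑ δ,
      eps3 α γ η * eps3 β δ θ * B α β * B γ δ = 2 * B η θ) :
    ∀ η θ, ∑ α, ∑ γ, ∑ β, ∑ δ,
      eps3 α γ η * eps3 β δ θ * (A * B) α β * (A * B) γ δ = 2 * (A * B) η θ := by
  have hA' : A.adjugate = Aᵀ := by
    ext i j
    have h := hA j i
    rw [eps3_adjugate] at h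
    simpa [Matrix.transpose_apply] using (by linarith : A.adjugate i j = A j i)
  have hB' : B.adjugate = Bᵀ := by
    ext i j
    have h := hB j i
    rw [eps3_adjugate] at h
    simpa [Matrix.transpose_apply] using (by linarith : B.adjugate i j = B j i)
  intro η θ
  rw [eps3_adjugate, Matrix.adjugate_mul_distrib, hA', hB', ← Matrix.transpose_mul,
    Matrix.transpose_apply]
end

section
/- Every Lie algebra automorphism of ℝ³ equipped with the cross product bracket is given by an SO(3) matrix; that is, if φ : ℝ³ → ℝ³ is a linear bijection with φ(x × y) = φ(x) × φ(y) for all x, y, then the matrix of φ is orthogonal with determinant 1. -/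
open Matrix

/-- Every Lie algebra automorphism of `ℝ³` with the cross product bracket is
given by an `SO(3)` matrix. -/
theorem stmt4 (f : (Fin 3 → ℝ) →ₗ[ℝ] (Fin 3 → ℝ)) (hbij : Function.Bijective f)
    (hhom : ∀ x y : Fin 3 → ℝ, f (crossProduct x y) = crossProduct (f x) (f y)) :
    (LinearMap.toMatrix' f)ᵀ * LinearMap.toMatrix' f = 1 ∧
      (LinearMap.toMatrix' f).det = 1 := by
  set A := LinearMap.toMatrix' f with hAdef
  set e0 : Fin 3 → ℝ := fun j => if j = 0 then 1 else 0 with he0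
  set e1 : Fin 3 → ℝ := fun j => if j = 1 then 1 else 0 with he1
  set e2 : Fin 3 → ℝ := fun j => if j = 2 then 1 else 0 with he2
  have hc01 : crossProduct e0 e1 = e2 := by
    rw [cross_apply]; funext i; fin_cases i <;> simp [he0, he1, he2]
  have hc12 : crossProduct e1 e2 = e0 := by
    rw [cross_apply]; funext i; fin_cases i <;> simp [he0, he1, he2]
  have hc20 : crossProduct e2 e0 = e1 := by
    rw [cross_apply]; funext i; fin_cases i <;> simp [he0, he1, he2]
  have hA0 : ∀ i, A i 0 = f e0 i := fun i =>
    (LinearMap.toMatrix'_apply f i 0).trans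
      (congrArg (fun x => f x i) (by funext j; simp [he0, Pi.single_apply]))
  have hA1 : ∀ i, A i 1 = f e1 i := fun i =>
    (LinearMap.toMatrix'_apply f i 1).trans
      (congrArg (fun x => f x i) (by funext j; simp [he1, Pi.single_apply]))
  have hA2 : ∀ i, A i 2 = f e2 i := fun i =>
    (LinearMap.toMatrix'_apply f i 2).trans
      (congrArg (fun x => f x i) (by funext j; simp [he2, Pi.single_apply]))
  -- column vectors
  set u := f e0 with hu'
  set v := f e1 with hv'
  set w := f e2 with hw'
  have hw : w = crossProduct u v := by rw [hu', hv', hw', ← hhom, hc01]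
  have hu : u = crossProduct v w := by rw [hu', hv', hw', ← hhom, hc12]
  have hv : v = crossProduct w u := by rw [hu', hv', hw', ← hhom, hc20]
  -- component equations
  have hw0 : w 0 = u 1 * v 2 - u 2 * v 1 := by rw [hw, cross_apply]; rfl
  have hw1 : w 1 = u 2 * v 0 - u 0 * v 2 := by rw [hw, cross_apply]; rfl
  have hw2 : w 2 = u 0 * v 1 - u 1 * v 0 := by rw [hw, cross_apply]; rfl
  have hu0 : u 0 = v 1 * w 2 - v 2 * w 1 := by rw [hu, cross_apply]; rfl
  have hu1 : u 1 = v 2 * w 0 - v 0 * w 2 := by rw [hu, cross_apply]; rfl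
  have hu2 : u 2 = v 0 * w 1 - v 1 * w 0 := by rw [hu, cross_apply]; rfl
  have hv0 : v 0 = w 1 * u 2 - w 2 * u 1 := by rw [hv, cross_apply]; rfl
  have hv1 : v 1 = w 2 * u 0 - w 0 * u 2 := by rw [hv, cross_apply]; rfl
  have hv2 : v 2 = w 0 * u 1 - w 1 * u 0 := by rw [hv, cross_apply]; rfl
  -- determinant
  have hdet : A.det = u 0 * (v 1 * w 2 - v 2 * w 1) - v 0 * (u 1 * w 2 - u 2 * w 1)
      + w 0 * (u 1 * v 2 - u 2 * v 1) := by
    rw [Matrix.det_fin_three]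
    simp only [hA0, hA1, hA2]
    ring
  have hdne : A.det ≠ 0 := by
    rw [hAdef, LinearMap.det_toMatrix']
    exact (LinearEquiv.ofBijective f hbij).isUnit_det'.ne_zero
  -- dot products
  have huu : u 0 * u 0 + u 1 * u 1 + u 2 * u 2 = A.det := by
    rw [hdet]; linear_combination u 0 * hu0 + u 1 * hu1 + u 2 * hu2
  have hvv : v 0 * v 0 + v 1 * v 1 + v 2 * v 2 = A.det := by
    rw [hdet]; linear_combination v 0 * hv0 + v 1 * hv1 + v 2 * hv2
  have hww : w 0 * w 0 + w 1 * w 1 + w 2 * w 2 = A.det := by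
    rw [hdet]; linear_combination w 0 * hw0 + w 1 * hw1 + w 2 * hw2
  have huv : u 0 * v 0 + u 1 * v 1 + u 2 * v 2 = 0 := by
    linear_combination v 0 * hu0 + v 1 * hu1 + v 2 * hu2
  have hvw : v 0 * w 0 + v 1 * w 1 + v 2 * w 2 = 0 := by
    linear_combination w 0 * hv0 + w 1 * hv1 + w 2 * hv2
  have huw : u 0 * w 0 + u 1 * w 1 + u 2 * w 2 = 0 := by
    linear_combination u 0 * hw0 + u 1 * hw1 + u 2 * hw2
  -- Lagrange identity: u·u = (v·v)(w·w) - (v·w)²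
  have hLag : u 0 * u 0 + u 1 * u 1 + u 2 * u 2 =
      (v 0 * v 0 + v 1 * v 1 + v 2 * v 2) * (w 0 * w 0 + w 1 * w 1 + w 2 * w 2)
        - (v 0 * w 0 + v 1 * w 1 + v 2 * w 2) ^ 2 := by
    linear_combination (u 0 + (v 1 * w 2 - v 2 * w 1)) * hu0
      + (u 1 + (v 2 * w 0 - v 0 * w 2)) * hu1 + (u 2 + (v 0 * w 1 - v 1 * w 0)) * hu2
  have hd1 : A.det = 1 := by
    have hdd : A.det * 1 = A.det * A.det := by
      linear_combination (-1 : ℝ) * huu + hLag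
        + (w 0 * w 0 + w 1 * w 1 + w 2 * w 2) * hvv + A.det * hww
        - (v 0 * w 0 + v 1 * w 1 + v 2 * w 2) * hvw
    exact (mul_left_cancel₀ hdne hdd).symm
  refine ⟨?_, hd1⟩
  have hAeq : A = !![u 0, v 0, w 0; u 1, v 1, w 1; u 2, v 2, w 2] := by
    ext i j
    fin_cases i <;> fin_cases j <;> simp [hA0, hA1, hA2]
  rw [hd1] at huu hvv hww
  rw [hAeq, Matrix.one_fin_three]
  ext i j
  fin_cases i <;> fin_cases j <;>
    simp [Matrix.mul_apply, Fin.sum_univ_three, Matrix.transpose_apply,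
      Matrix.vecHead, Matrix.vecTail] <;> linarith
end

section
/- Let I¹, I², I³ and J¹, J², J³ be endomorphisms of real vector spaces V and W respectively, each triple satisfying the imaginary quaternion relations Iᵅ ∘ Iᵝ = ∑_γ ε_{αβγ} Iᵞ − δ_{αβ}·id and likewise for J. For any A ∈ SO(3), the endomorphism K = −∑_{α,β} A_{αβ} (Iᵅ ⊗ Jᵝ) of V ⊗ W satisfies K ∘ K = 3·id − 2·K. -/
open Matrix

open TensorProduct

set_option maxHeartbeats 3200000 in
/-- If `Iᵅ` on `V` and `Jᵝ` on `W` satisfy the imaginary quaternion relations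
and `A ∈ SO(3)`, then `K = −∑ A_{αβ} Iᵅ ⊗ Jᵝ` satisfies `K² = 3·id − 2·K`. -/
theorem stmt7 {V W : Type*} [AddCommGroup V] [Module ℝ V]
    [AddCommGroup W] [Module ℝ W]
    (I : Fin 3 → V →ₗ[ℝ] V) (J : Fin 3 → W →ₗ[ℝ] W)
    (hI : ∀ α β, I α ∘ₗ I β =
      (∑ γ, eps3 α β γ • I γ) - (if α = β then (1 : ℝ) else 0) • LinearMap.id)
    (hJ : ∀ α β, J α ∘ₗ J β =
      (∑ γ, eps3 α β γ • J γ) - (if α = β then (1 : ℝ) else 0) • LinearMap.id)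
    (A : Matrix (Fin 3) (Fin 3) ℝ) (horth : Aᵀ * A = 1) (hdet : A.det = 1)
    (K : V ⊗[ℝ] W →ₗ[ℝ] V ⊗[ℝ] W)
    (hKdef : K = -∑ α, ∑ β, A α β • TensorProduct.map (I α) (J β)) :
    K ∘ₗ K = (3 : ℝ) • LinearMap.id - (2 : ℝ) • K := by
  have hAAT : A * Aᵀ = 1 := mul_eq_one_comm.mp horth
  have hadj : A.adjugate = Aᵀ := by
    calc A.adjugate = Aᵀ * A * A.adjugate := by rw [horth, Matrix.one_mul]
    _ = Aᵀ * (A * A.adjugate) := by rw [Matrix.mul_assoc]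
    _ = Aᵀ := by rw [Matrix.mul_adjugate, hdet, one_smul, Matrix.mul_one]
  have ho : ∀ i j : Fin 3, A 0 i * A 0 j + A 1 i * A 1 j + A 2 i * A 2 j
      = if i = j then 1 else 0 := by
    intro i j
    have h := congrFun (congrFun horth i) j
    simpa [Matrix.mul_apply, Fin.sum_univ_three, Matrix.one_apply,
      Matrix.transpose_apply] using h
  have ho' : ∀ i j : Fin 3, A i 0 * A j 0 + A i 1 * A j 1 + A i 2 * A j 2
      = if i = j then 1 else 0 := by
    intro i j
    have h := congrFun (congrFun hAAT i) j
    simpa [Matrix.mul_apply, Fin.sum_univ_three, Matrix.one_apply,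
      Matrix.transpose_apply] using h
  have o00 : A 0 0 * A 0 0 + A 1 0 * A 1 0 + A 2 0 * A 2 0 = 1 := by simpa using ho 0 0
  have p00 : A 0 0 * A 0 0 + A 0 1 * A 0 1 + A 0 2 * A 0 2 = 1 := by simpa using ho' 0 0
  have o01 : A 0 0 * A 0 1 + A 1 0 * A 1 1 + A 2 0 * A 2 1 = 0 := by simpa using ho 0 1
  have p01 : A 0 0 * A 1 0 + A 0 1 * A 1 1 + A 0 2 * A 1 2 = 0 := by simpa using ho' 0 1
  have o02 : A 0 0 * A 0 2 + A 1 0 * A 1 2 + A 2 0 * A 2 2 = 0 := by simpa using ho 0 2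
  have p02 : A 0 0 * A 2 0 + A 0 1 * A 2 1 + A 0 2 * A 2 2 = 0 := by simpa using ho' 0 2
  have o10 : A 0 1 * A 0 0 + A 1 1 * A 1 0 + A 2 1 * A 2 0 = 0 := by simpa using ho 1 0
  have p10 : A 1 0 * A 0 0 + A 1 1 * A 0 1 + A 1 2 * A 0 2 = 0 := by simpa using ho' 1 0
  have o11 : A 0 1 * A 0 1 + A 1 1 * A 1 1 + A 2 1 * A 2 1 = 1 := by simpa using ho 1 1
  have p11 : A 1 0 * A 1 0 + A 1 1 * A 1 1 + A 1 2 * A 1 2 = 1 := by simpa using ho' 1 1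
  have o12 : A 0 1 * A 0 2 + A 1 1 * A 1 2 + A 2 1 * A 2 2 = 0 := by simpa using ho 1 2
  have p12 : A 1 0 * A 2 0 + A 1 1 * A 2 1 + A 1 2 * A 2 2 = 0 := by simpa using ho' 1 2
  have o20 : A 0 2 * A 0 0 + A 1 2 * A 1 0 + A 2 2 * A 2 0 = 0 := by simpa using ho 2 0
  have p20 : A 2 0 * A 0 0 + A 2 1 * A 0 1 + A 2 2 * A 0 2 = 0 := by simpa using ho' 2 0
  have o21 : A 0 2 * A 0 1 + A 1 2 * A 1 1 + A 2 2 * A 2 1 = 0 := by simpa using ho 2 1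
  have p21 : A 2 0 * A 1 0 + A 2 1 * A 1 1 + A 2 2 * A 1 2 = 0 := by simpa using ho' 2 1
  have o22 : A 0 2 * A 0 2 + A 1 2 * A 1 2 + A 2 2 * A 2 2 = 1 := by simpa using ho 2 2
  have p22 : A 2 0 * A 2 0 + A 2 1 * A 2 1 + A 2 2 * A 2 2 = 1 := by simpa using ho' 2 2
  have hm : ∀ i j : Fin 3, A.adjugate i j = A j i := by
    intro i j; rw [hadj]; rfl
  have m00 : A 1 1 * A 2 2 - A 1 2 * A 2 1 = A 0 0 := by
    simpa [Matrix.adjugate_fin_three] using hm 0 0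
  have m01 : -(A 0 1 * A 2 2) + A 0 2 * A 2 1 = A 1 0 := by
    simpa [Matrix.adjugate_fin_three] using hm 0 1
  have m02 : A 0 1 * A 1 2 - A 0 2 * A 1 1 = A 2 0 := by
    simpa [Matrix.adjugate_fin_three] using hm 0 2
  have m10 : -(A 1 0 * A 2 2) + A 1 2 * A 2 0 = A 0 1 := by
    simpa [Matrix.adjugate_fin_three] using hm 1 0
  have m11 : A 0 0 * A 2 2 - A 0 2 * A 2 0 = A 1 1 := by
    simpa [Matrix.adjugate_fin_three] using hm 1 1
  have m12 : -(A 0 0 * A 1 2) + A 0 2 * A 1 0 = A 2 1 := by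
    simpa [Matrix.adjugate_fin_three] using hm 1 2
  have m20 : A 1 0 * A 2 1 - A 1 1 * A 2 0 = A 0 2 := by
    simpa [Matrix.adjugate_fin_three] using hm 2 0
  have m21 : -(A 0 0 * A 2 1) + A 0 1 * A 2 0 = A 1 2 := by
    simpa [Matrix.adjugate_fin_three] using hm 2 1
  have m22 : A 0 0 * A 1 1 - A 0 1 * A 1 0 = A 2 2 := by
    simpa [Matrix.adjugate_fin_three] using hm 2 2
  have e000 : eps3 0 0 0 = (0 : ℝ) := by norm_num [eps3]
  have e001 : eps3 0 0 1 = (0 : ℝ) := by norm_num [eps3]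
  have e002 : eps3 0 0 2 = (0 : ℝ) := by norm_num [eps3]
  have e010 : eps3 0 1 0 = (0 : ℝ) := by norm_num [eps3]
  have e011 : eps3 0 1 1 = (0 : ℝ) := by norm_num [eps3]
  have e012 : eps3 0 1 2 = (1 : ℝ) := by norm_num [eps3]
  have e020 : eps3 0 2 0 = (0 : ℝ) := by norm_num [eps3]
  have e021 : eps3 0 2 1 = (-1 : ℝ) := by norm_num [eps3]
  have e022 : eps3 0 2 2 = (0 : ℝ) := by norm_num [eps3]
  have e100 : eps3 1 0 0 = (0 : ℝ) := by norm_num [eps3]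
  have e101 : eps3 1 0 1 = (0 : ℝ) := by norm_num [eps3]
  have e102 : eps3 1 0 2 = (-1 : ℝ) := by norm_num [eps3]
  have e110 : eps3 1 1 0 = (0 : ℝ) := by norm_num [eps3]
  have e111 : eps3 1 1 1 = (0 : ℝ) := by norm_num [eps3]
  have e112 : eps3 1 1 2 = (0 : ℝ) := by norm_num [eps3]
  have e120 : eps3 1 2 0 = (1 : ℝ) := by norm_num [eps3]
  have e121 : eps3 1 2 1 = (0 : ℝ) := by norm_num [eps3]
  have e122 : eps3 1 2 2 = (0 : ℝ) := by norm_num [eps3]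
  have e200 : eps3 2 0 0 = (0 : ℝ) := by norm_num [eps3]
  have e201 : eps3 2 0 1 = (1 : ℝ) := by norm_num [eps3]
  have e202 : eps3 2 0 2 = (0 : ℝ) := by norm_num [eps3]
  have e210 : eps3 2 1 0 = (-1 : ℝ) := by norm_num [eps3]
  have e211 : eps3 2 1 1 = (0 : ℝ) := by norm_num [eps3]
  have e212 : eps3 2 1 2 = (0 : ℝ) := by norm_num [eps3]
  have e220 : eps3 2 2 0 = (0 : ℝ) := by norm_num [eps3]
  have e221 : eps3 2 2 1 = (0 : ℝ) := by norm_num [eps3]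
  have e222 : eps3 2 2 2 = (0 : ℝ) := by norm_num [eps3]
  have hmapc : ∀ α β γ δ : Fin 3,
      TensorProduct.map (I α) (J β) ∘ₗ TensorProduct.map (I γ) (J δ)
        = TensorProduct.map (I α ∘ₗ I γ) (J β ∘ₗ J δ) :=
    fun _ _ _ _ => (TensorProduct.map_comp _ _ _ _).symm
  have hid : (LinearMap.id : V ⊗[ℝ] W →ₗ[ℝ] V ⊗[ℝ] W)
      = TensorProduct.map LinearMap.id LinearMap.id := (TensorProduct.map_id).symm
  subst hKdef
  rw [hid]
  simp only [Fin.sum_univ_three, LinearMap.neg_comp, LinearMap.comp_neg, neg_neg,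
    LinearMap.add_comp, LinearMap.comp_add, LinearMap.smul_comp, LinearMap.comp_smul,
    hmapc, hI, hJ, e000, e001, e002, e010, e011, e012, e020, e021, e022, e100, e101,
    e102, e110, e111, e112, e120, e121, e122, e200, e201, e202, e210, e211, e212,
    e220, e221, e222, reduceIte, Fin.isValue, zero_smul, one_smul, zero_add, add_zero,
    neg_smul, Fin.reduceEq, if_false, if_true]
  simp only [← TensorProduct.mapBilinear_apply]
  simp only [map_add, map_sub, _root_.map_smul, map_neg, map_zero, LinearMap.add_apply,
    LinearMap.sub_apply, LinearMap.smul_apply, LinearMap.neg_apply, LinearMap.zero_apply]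
  match_scalars <;>
    linarith [o00, p00, o01, p01, o02, p02, o10, p10, o11, p11, o12, p12, o20, p20, o21, p21, o22, p22,
      m00, m01, m02, m10, m11, m12, m20, m21, m22]
end

section
/- Let Ω be the Cayley 4-form on ℝ⁸, Ω = e^{1234} + e^{1258} − e^{1267} + e^{1357} + e^{1368} − e^{1456} + e^{1478} + e^{2356} − e^{2378} + e^{2457} + e^{2468} − e^{3458} + e^{3467} + e^{5678}. Define on ℝ⁴ × ℝ⁴ the anti-self-dual 2-forms Iᵅ on the first factor (I¹ = e^{12} − e^{34}, I² = e^{13} + e^{24}, I³ = e^{14} − e^{23}) and Îᵅ on the second factor (Î¹ = e^{56} − e^{78}, Î² = e^{57} + e^{68}, Î³ = e^{58} − e^{67}). Then Ω = −(1/6) ∑_α Iᵅ∧Iᵅ − (1/6) ∑_α Îᵅ∧Îᵅ + ∑_{α,β} A_{αβ} Iᵅ∧Îᵝ, where A is the SO(3) matrix with rows (0,0,1), (0,1,0), (−1,0,0). -/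
open Matrix

open ExteriorAlgebra

/-- The standard basis 1-vectors of `ℝ⁸` inside the exterior algebra
(0-based: `e 0, …, e 7` correspond to `e¹, …, e⁸`). -/
noncomputable def e (a : Fin 8) : ExteriorAlgebra ℝ (Fin 8 → ℝ) :=
  ExteriorAlgebra.ι ℝ (Pi.single a 1)

/-- The Cayley 4-form on `ℝ⁸` (as an element of the exterior algebra). -/
noncomputable def CayleyOmega : ExteriorAlgebra ℝ (Fin 8 → ℝ) :=
  e 0 * e 1 * e 2 * e 3 + e 0 * e 1 * e 4 * e 7 - e 0 * e 1 * e 5 * e 6 +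
    e 0 * e 2 * e 4 * e 6 + e 0 * e 2 * e 5 * e 7 - e 0 * e 3 * e 4 * e 5 +
    e 0 * e 3 * e 6 * e 7 + e 1 * e 2 * e 4 * e 5 - e 1 * e 2 * e 6 * e 7 +
    e 1 * e 3 * e 4 * e 6 + e 1 * e 3 * e 5 * e 7 - e 2 * e 3 * e 4 * e 7 +
    e 2 * e 3 * e 5 * e 6 + e 4 * e 5 * e 6 * e 7

/-- The anti-self-dual 2-forms on the first `ℝ⁴` factor:
`I¹ = e^{12} − e^{34}`, `I² = e^{13} + e^{24}`, `I³ = e^{14} − e^{23}`. -/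
noncomputable def Iv : Fin 3 → ExteriorAlgebra ℝ (Fin 8 → ℝ) :=
  ![e 0 * e 1 - e 2 * e 3, e 0 * e 2 + e 1 * e 3, e 0 * e 3 - e 1 * e 2]

/-- The anti-self-dual 2-forms on the second `ℝ⁴` factor:
`Î¹ = e^{56} − e^{78}`, `Î² = e^{57} + e^{68}`, `Î³ = e^{58} − e^{67}`. -/
noncomputable def Jv : Fin 3 → ExteriorAlgebra ℝ (Fin 8 → ℝ) :=
  ![e 4 * e 5 - e 6 * e 7, e 4 * e 6 + e 5 * e 7, e 4 * e 7 - e 5 * e 6]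

/-- The `SO(3)` matrix appearing in the decomposition of the Cayley form. -/
noncomputable def Amat : Matrix (Fin 3) (Fin 3) ℝ := !![0, 0, 1; 0, 1, 0; -1, 0, 0]

lemma esq (a : Fin 8) : e a * e a = 0 := ExteriorAlgebra.ι_sq_zero _

lemma esq' (a : Fin 8) (x : ExteriorAlgebra ℝ (Fin 8 → ℝ)) : e a * (e a * x) = 0 := by
  rw [← mul_assoc, esq, zero_mul]

lemma eswap (a b : Fin 8) : e a * e b = -(e b * e a) :=
  eq_neg_of_add_eq_zero_left (ExteriorAlgebra.ι_add_mul_swap _ _)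

lemma eswap' (a b : Fin 8) (x : ExteriorAlgebra ℝ (Fin 8 → ℝ)) :
    e a * (e b * x) = -(e b * (e a * x)) := by
  rw [← mul_assoc, eswap, neg_mul, mul_assoc]

lemma s10 : e 1 * e 0 = -(e 0 * e 1) := eswap _ _
lemma s20 : e 2 * e 0 = -(e 0 * e 2) := eswap _ _
lemma s21 : e 2 * e 1 = -(e 1 * e 2) := eswap _ _
lemma s30 : e 3 * e 0 = -(e 0 * e 3) := eswap _ _
lemma s31 : e 3 * e 1 = -(e 1 * e 3) := eswap _ _
lemma s32 : e 3 * e 2 = -(e 2 * e 3) := eswap _ _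
lemma s54 : e 5 * e 4 = -(e 4 * e 5) := eswap _ _
lemma s64 : e 6 * e 4 = -(e 4 * e 6) := eswap _ _
lemma s65 : e 6 * e 5 = -(e 5 * e 6) := eswap _ _
lemma s74 : e 7 * e 4 = -(e 4 * e 7) := eswap _ _
lemma s75 : e 7 * e 5 = -(e 5 * e 7) := eswap _ _
lemma s76 : e 7 * e 6 = -(e 6 * e 7) := eswap _ _

lemma t10 (x) : e 1 * (e 0 * x) = -(e 0 * (e 1 * x)) := eswap' _ _ _
lemma t20 (x) : e 2 * (e 0 * x) = -(e 0 * (e 2 * x)) := eswap' _ _ _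
lemma t21 (x) : e 2 * (e 1 * x) = -(e 1 * (e 2 * x)) := eswap' _ _ _
lemma t30 (x) : e 3 * (e 0 * x) = -(e 0 * (e 3 * x)) := eswap' _ _ _
lemma t31 (x) : e 3 * (e 1 * x) = -(e 1 * (e 3 * x)) := eswap' _ _ _
lemma t32 (x) : e 3 * (e 2 * x) = -(e 2 * (e 3 * x)) := eswap' _ _ _
lemma t54 (x) : e 5 * (e 4 * x) = -(e 4 * (e 5 * x)) := eswap' _ _ _
lemma t64 (x) : e 6 * (e 4 * x) = -(e 4 * (e 6 * x)) := eswap' _ _ _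
lemma t65 (x) : e 6 * (e 5 * x) = -(e 5 * (e 6 * x)) := eswap' _ _ _
lemma t74 (x) : e 7 * (e 4 * x) = -(e 4 * (e 7 * x)) := eswap' _ _ _
lemma t75 (x) : e 7 * (e 5 * x) = -(e 5 * (e 7 * x)) := eswap' _ _ _
lemma t76 (x) : e 7 * (e 6 * x) = -(e 6 * (e 7 * x)) := eswap' _ _ _

/-- Decomposition of the Cayley 4-form:
`Ω = −(1/6) ∑ Iᵅ∧Iᵅ − (1/6) ∑ Îᵅ∧Îᵅ + ∑ A_{αβ} Iᵅ∧Îᵝ`. -/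
theorem stmt11 :
    CayleyOmega =
      (-(1 / 6 : ℝ)) • (∑ α, Iv α * Iv α) +
        (-(1 / 6 : ℝ)) • (∑ α, Jv α * Jv α) +
        ∑ α, ∑ β, Amat α β • (Iv α * Jv β) := by
  simp only [CayleyOmega, Iv, Jv, Amat, Fin.sum_univ_three, Matrix.cons_val_zero,
    Matrix.cons_val_one, Matrix.head_cons, Matrix.cons_val_two, Matrix.tail_cons,
    Matrix.cons_val', Matrix.empty_val', Matrix.cons_val_fin_one, Matrix.of_apply,
    Matrix.head_fin_const,
    zero_smul, one_smul, neg_smul, add_zero, zero_add,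
    mul_sub, sub_mul, mul_add, add_mul, mul_neg, neg_mul, mul_assoc,
    esq, esq', s10, s20, s21, s30, s31, s32, s54, s64, s65, s74, s75, s76,
    t10, t20, t21, t30, t31, t32, t54, t64, t65, t74, t75, t76,
    mul_zero, zero_mul, neg_neg, sub_neg_eq_add, sub_zero, zero_sub, neg_zero]
  module
end
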